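/- Equivalence of the multiplex LTM and the multiplex LEM: for every multiplex network w on n agents with m layers, every seed set S₀ ⊆ Fin n, every protocol assignment u, and every agent i, the probability (over thresholds μ distributed according to the product of uniform measures on [0,1]) that i belongs to the steady-state active set S n of the multiplex LTM equals the probability (over live-edge selections σ distributed according to the product PMF with ℙ(σ i k = j) = w k i j) that i is U-reachable from S₀ under σ; that is, ℙ_LTM(i) = r(i). -/

import Mathlib

open MeasureTheory

inductive Protocol
  | OR
  | AND
deriving DecidableEq

noncomputable def ltmStep {n m : ℕ} (w : Fin m → Fin n → Fin n → ℝ)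
    (u : Fin n → Protocol) (μ : Fin n → Fin m → ℝ)
    (A : Finset (Fin n)) : Finset (Fin n) :=
  A ∪ Finset.univ.filter fun i =>
    (u i = Protocol.OR ∧ ∃ k, μ i k < ∑ j ∈ A, w k i j) ∨
    (u i = Protocol.AND ∧ ∀ k, μ i k < ∑ j ∈ A, w k i j)

noncomputable def ltmSS {n m : ℕ} (w : Fin m → Fin n → Fin n → ℝ)
    (u : Fin n → Protocol) (S₀ : Finset (Fin n))
    (μ : Fin n → Fin m → ℝ) : Finset (Fin n) :=
  (ltmStep w u μ)^[n] S₀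

noncomputable def thMeasure (n m : ℕ) : Measure (Fin n → Fin m → ℝ) :=
  Measure.pi fun _ => Measure.pi fun _ => volume.restrict (Set.Icc (0:ℝ) 1)

noncomputable def pLTM {n m : ℕ} (w : Fin m → Fin n → Fin n → ℝ)
    (u : Fin n → Protocol) (S₀ : Finset (Fin n)) (i : Fin n) : ℝ :=
  (thMeasure n m {μ | i ∈ ltmSS w u S₀ μ}).toReal

def lemStep {n m : ℕ} (S₀ : Finset (Fin n)) (u : Fin n → Protocol)
    (σ : Fin n → Fin m → Fin n) (A : Finset (Fin n)) : Finset (Fin n) :=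
  S₀ ∪ A ∪ Finset.univ.filter fun i =>
    (u i = Protocol.OR ∧ ∃ k, σ i k ∈ A) ∨
    (u i = Protocol.AND ∧ ∀ k, σ i k ∈ A)

def UReachable {n m : ℕ} (S₀ : Finset (Fin n)) (u : Fin n → Protocol)
    (σ : Fin n → Fin m → Fin n) (i : Fin n) : Prop :=
  i ∈ (lemStep S₀ u σ)^[n] S₀

instance {n m : ℕ} (S₀ : Finset (Fin n)) (u : Fin n → Protocol)
    (σ : Fin n → Fin m → Fin n) (i : Fin n) : Decidable (UReachable S₀ u σ i) := by
  unfold UReachable; infer_instance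

noncomputable def rProb {n m : ℕ} (w : Fin m → Fin n → Fin n → ℝ)
    (S₀ : Finset (Fin n)) (u : Fin n → Protocol) (i : Fin n) : ℝ :=
  ∑ σ : Fin n → Fin m → Fin n,
    if UReachable S₀ u σ i then ∏ a : Fin n, ∏ k : Fin m, w k a (σ a k) else 0

noncomputable def casCen {n m : ℕ} (w : Fin m → Fin n → Fin n → ℝ)
    (u : Fin n → Protocol) (j : Fin n) : ℝ :=
  ∑ i : Fin n, pLTM w u {j} i

noncomputable def pathW (N : ℕ) (i j : Fin N) : ℝ :=
  if j.val = i.val + 1 ∨ i.val = j.val + 1 then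
    (if i.val = 0 ∨ i.val = N - 1 then 1 else 1/2)
  else 0

noncomputable def cycleW (N : ℕ) (i j : Fin N) : ℝ :=
  if (i.val + 1) % N = j.val ∨ (j.val + 1) % N = i.val then 1/2 else 0

noncomputable def permW2 (N : ℕ) (i j : Fin N) : ℝ :=
  if ((i.val + 1) % N = j.val ∨ (j.val + 1) % N = i.val) ∧
      ¬((i.val = N - 2 ∧ j.val = N - 1) ∨ (i.val = N - 1 ∧ j.val = N - 2)) then
    (if i.val = N - 2 ∨ i.val = N - 1 then 1 else 1/2)
  else 0

namespace LL

/-! ### Protocol conditions -/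

def pCondR {m : ℕ} (P : Protocol) (c : Fin m → ℝ) (r : Fin m → ℝ) : Prop :=
  match P with
  | Protocol.OR => ∃ k, r k < c k
  | Protocol.AND => ∀ k, r k < c k

def pCondE {n m : ℕ} (P : Protocol) (A : Finset (Fin n)) (f : Fin m → Fin n) : Prop :=
  match P with
  | Protocol.OR => ∃ k, f k ∈ A
  | Protocol.AND => ∀ k, f k ∈ A

noncomputable def uMeas (m : ℕ) : Measure (Fin m → ℝ) :=
  Measure.pi fun _ => volume.restrict (Set.Icc (0:ℝ) 1)

noncomputable def qR {m : ℕ} (P : Protocol) (c : Fin m → ℝ) : ℝ :=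
  match P with
  | Protocol.OR => 1 - ∏ k, (1 - c k)
  | Protocol.AND => ∏ k, c k

instance : IsProbabilityMeasure (volume.restrict (Set.Icc (0:ℝ) 1)) := by
  constructor
  rw [Measure.restrict_apply_univ, Real.volume_Icc]
  norm_num

instance (m : ℕ) : IsProbabilityMeasure (uMeas m) := by
  unfold uMeas; infer_instance

instance (n m : ℕ) : IsProbabilityMeasure (thMeasure n m) := by
  unfold thMeasure; infer_instance

lemma restrict_Iio (a : ℝ) (h1 : a ≤ 1) :
    volume.restrict (Set.Icc (0:ℝ) 1) (Set.Iio a) = ENNReal.ofReal a := by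
  rw [Measure.restrict_apply measurableSet_Iio]
  have h : Set.Iio a ∩ Set.Icc 0 1 = Set.Ico 0 a := by
    ext x
    simp only [Set.mem_inter_iff, Set.mem_Iio, Set.mem_Icc, Set.mem_Ico]
    constructor
    · rintro ⟨h, h2, _⟩; exact ⟨h2, h⟩
    · rintro ⟨h2, h⟩; exact ⟨h, h2, le_trans h.le h1⟩
  rw [h, Real.volume_Ico]
  norm_num

lemma restrict_Ici (a : ℝ) (h0 : 0 ≤ a) :
    volume.restrict (Set.Icc (0:ℝ) 1) (Set.Ici a) = ENNReal.ofReal (1 - a) := by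
  rw [Measure.restrict_apply measurableSet_Ici]
  have h : Set.Ici a ∩ Set.Icc 0 1 = Set.Icc a 1 := by
    ext x
    simp only [Set.mem_inter_iff, Set.mem_Ici, Set.mem_Icc]
    constructor
    · rintro ⟨h, _, h3⟩; exact ⟨h, h3⟩
    · rintro ⟨h, h3⟩; exact ⟨h, le_trans h0 h, h3⟩
  rw [h, Real.volume_Icc]

lemma measurableSet_pCondR {m : ℕ} (P : Protocol) (c : Fin m → ℝ) :
    MeasurableSet {r : Fin m → ℝ | pCondR P c r} := by
  cases P
  · have h : {r : Fin m → ℝ | pCondR Protocol.OR c r}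
        = ⋃ k, (fun r : Fin m → ℝ => r k) ⁻¹' Set.Iio (c k) := by
      ext r; simp [pCondR]
    rw [h]
    exact MeasurableSet.iUnion fun k => (measurable_pi_apply k) measurableSet_Iio
  · have h : {r : Fin m → ℝ | pCondR Protocol.AND c r}
        = ⋂ k, (fun r : Fin m → ℝ => r k) ⁻¹' Set.Iio (c k) := by
      ext r; simp [pCondR]
    rw [h]
    exact MeasurableSet.iInter fun k => (measurable_pi_apply k) measurableSet_Iio

lemma uMeas_pCondR_toReal {m : ℕ} (P : Protocol) (c : Fin m → ℝ)
    (h0 : ∀ k, 0 ≤ c k) (h1 : ∀ k, c k ≤ 1) :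
    (uMeas m {r | pCondR P c r}).toReal = qR P c := by
  cases P
  · -- OR
    have hcomp : {r : Fin m → ℝ | pCondR Protocol.OR c r}
        = (Set.univ.pi fun k => Set.Ici (c k))ᶜ := by
      ext r
      simp [pCondR, Set.mem_pi, not_forall, not_le, Pi.le_def]
    have hpi : uMeas m (Set.univ.pi fun k => Set.Ici (c k))
        = ∏ k, ENNReal.ofReal (1 - c k) := by
      rw [uMeas, Measure.pi_pi]
      exact Finset.prod_congr rfl fun k _ => restrict_Ici (c k) (h0 k)
    have hmeas : MeasurableSet (Set.univ.pi fun k : Fin m => Set.Ici (c k)) :=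
      MeasurableSet.univ_pi fun k => measurableSet_Ici
    rw [hcomp, prob_compl_eq_one_sub hmeas, hpi]
    have hle : (∏ k, ENNReal.ofReal (1 - c k)) ≤ 1 := by
      apply Finset.prod_le_one
      · intro k _; exact zero_le
      · intro k _; exact ENNReal.ofReal_le_one.mpr (by linarith [h0 k])
    rw [ENNReal.toReal_sub_of_le hle ENNReal.one_ne_top, ENNReal.toReal_one,
      ENNReal.toReal_prod]
    have hto : ∀ k : Fin m, (ENNReal.ofReal (1 - c k)).toReal = 1 - c k := fun k =>
      ENNReal.toReal_ofReal (by linarith [h1 k])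
    rw [Finset.prod_congr rfl fun k _ => hto k]
    rfl
  · -- AND
    have hset : {r : Fin m → ℝ | pCondR Protocol.AND c r}
        = Set.univ.pi fun k => Set.Iio (c k) := by
      ext r; simp [pCondR, Set.mem_pi]
    rw [hset, uMeas, Measure.pi_pi]
    rw [Finset.prod_congr rfl fun k _ => restrict_Iio (c k) (h1 k),
      ENNReal.toReal_prod]
    have hto : ∀ k : Fin m, (ENNReal.ofReal (c k)).toReal = c k := fun k =>
      ENNReal.toReal_ofReal (h0 k)
    rw [Finset.prod_congr rfl fun k _ => hto k]
    rfl

/-! ### Live-edge sums -/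

open Classical in
lemma sum_prod_pi {n m : ℕ} (g : Fin m → Fin n → ℝ) :
    ∑ f : Fin m → Fin n, ∏ k, g k (f k) = ∏ k, ∑ j, g k j := by
  rw [Finset.prod_univ_sum, Fintype.piFinset_univ]

open Classical in
lemma sigma_total {n m : ℕ} (W : Fin m → Fin n → ℝ) (hW1 : ∀ k, ∑ j, W k j = 1) :
    ∑ f : Fin m → Fin n, ∏ k, W k (f k) = 1 := by
  rw [sum_prod_pi]
  simp [hW1]

open Classical in
lemma sigma_sum {n m : ℕ} (P : Protocol) (A : Finset (Fin n)) (W : Fin m → Fin n → ℝ)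
    (hW1 : ∀ k, ∑ j, W k j = 1) :
    ∑ f : Fin m → Fin n, (if pCondE P A f then ∏ k, W k (f k) else 0)
      = qR P (fun k => ∑ j ∈ A, W k j) := by
  have hAND : ∀ B : Finset (Fin n),
      ∑ f : Fin m → Fin n, (if pCondE Protocol.AND B f then ∏ k, W k (f k) else 0)
        = ∏ k, ∑ j ∈ B, W k j := by
    intro B
    have h1 : ∀ f : Fin m → Fin n,
        (if pCondE Protocol.AND B f then ∏ k, W k (f k) else 0)
          = ∏ k, (if f k ∈ B then W k (f k) else 0) := by
      intro f
      unfold pCondE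
      by_cases h : ∀ k, f k ∈ B
      · rw [if_pos h]
        exact Finset.prod_congr rfl fun k _ => (if_pos (h k)).symm
      · rw [if_neg h]
        push_neg at h
        obtain ⟨k, hk⟩ := h
        symm
        apply Finset.prod_eq_zero (Finset.mem_univ k)
        rw [if_neg hk]
    rw [Finset.sum_congr rfl fun f _ => h1 f]
    exact (sum_prod_pi (fun k x => if x ∈ B then W k x else 0)).trans
      (Finset.prod_congr rfl fun k _ => by rw [Finset.sum_ite_mem, Finset.univ_inter])
  cases P
  · -- OR
    have h2 : ∀ f : Fin m → Fin n,
        (if pCondE Protocol.OR A f then ∏ k, W k (f k) else 0)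
          = ∏ k, W k (f k) - (if pCondE Protocol.AND Aᶜ f then ∏ k, W k (f k) else 0) := by
      intro f
      unfold pCondE
      by_cases h : ∃ k, f k ∈ A
      · rw [if_pos h, if_neg, sub_zero]
        · obtain ⟨k, hk⟩ := h
          intro hall
          exact absurd hk (Finset.mem_compl.mp (hall k))
      · rw [if_neg h, if_pos, sub_self]
        push_neg at h
        exact fun k => Finset.mem_compl.mpr (h k)
    rw [Finset.sum_congr rfl fun f _ => h2 f, Finset.sum_sub_distrib,
      sigma_total W hW1, hAND]
    show (1 : ℝ) - _ = 1 - ∏ k, (1 - ∑ j ∈ A, W k j)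
    congr 1
    refine Finset.prod_congr rfl fun k _ => ?_
    have h3 := Finset.sum_compl_add_sum A (W k)
    rw [hW1 k] at h3
    linarith
  · exact hAND A

/-! ### Monotonicity -/

lemma pCondE_mono {n m : ℕ} (P : Protocol) {A B : Finset (Fin n)} (h : A ⊆ B)
    {f : Fin m → Fin n} (hf : pCondE P A f) : pCondE P B f := by
  cases P
  · obtain ⟨k, hk⟩ := hf; exact ⟨k, h hk⟩
  · exact fun k => h (hf k)

lemma pCondR_mono {m : ℕ} (P : Protocol) {c c' : Fin m → ℝ} (h : ∀ k, c k ≤ c' k)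
    {r : Fin m → ℝ} (hr : pCondR P c r) : pCondR P c' r := by
  cases P
  · obtain ⟨k, hk⟩ := hr; exact ⟨k, lt_of_lt_of_le hk (h k)⟩
  · exact fun k => lt_of_lt_of_le (hr k) (h k)

/-! ### Trajectory reductions -/

lemma iter_eq_iff {α : Type*} (f : α → α) (S₀ : α) (N : ℕ) (T : Fin (N+1) → α) :
    (∀ t : Fin (N+1), f^[t.val] S₀ = T t) ↔
      (T 0 = S₀ ∧ ∀ t : Fin N, f (T t.castSucc) = T t.succ) := by
  constructor
  · intro h
    refine ⟨by simpa using (h 0).symm, fun t => ?_⟩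
    rw [← h t.castSucc, ← h t.succ, Fin.coe_castSucc, Fin.val_succ,
      Function.iterate_succ_apply']
  · rintro ⟨h0, hs⟩ t
    have key : ∀ s (hsN : s < N + 1), f^[s] S₀ = T ⟨s, hsN⟩ := by
      intro s
      induction s with
      | zero => intro _; simpa using h0.symm
      | succ s ih =>
        intro hsN
        have hsN' : s < N + 1 := by omega
        have hsN'' : s < N := by omega
        rw [Function.iterate_succ_apply', ih hsN']
        exact hs ⟨s, hsN''⟩
    simpa using key t.val t.isLt

section Red
variable {n : ℕ} {c : Fin n → Prop} {b : Fin (n+1) → Prop}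

lemma red_mem0 (hb : ∀ s t : Fin (n+1), s ≤ t → b s → b t) (h0 : b 0) :
    (∀ t : Fin n, (b t.succ ↔ b t.castSucc ∨ c t)) := by
  intro t
  exact iff_of_true (hb 0 t.succ (Fin.zero_le _) h0)
    (Or.inl (hb 0 t.castSucc (Fin.zero_le _) h0))

lemma red_never (hb : ∀ s t : Fin (n+1), s ≤ t → b s → b t)
    (hc : ∀ s t : Fin n, s ≤ t → c s → c t)
    (hl : ¬ b (Fin.last n)) (hn : 0 < n) :
    (∀ t : Fin n, (b t.succ ↔ b t.castSucc ∨ c t)) ↔ ¬ c ⟨n-1, by omega⟩ := by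
  have hnall : ∀ t : Fin (n+1), ¬ b t := fun t ht =>
    hl (hb t (Fin.last n) (Fin.le_last t) ht)
  constructor
  · intro h hcontra
    exact hnall _ ((h ⟨n-1, by omega⟩).mpr (Or.inr hcontra))
  · intro hnc t
    refine iff_of_false (hnall _) ?_
    rintro (h | h)
    · exact hnall _ h
    · exact hnc (hc t ⟨n-1, by omega⟩
        (by simp only [Fin.le_def, Fin.val_succ, Fin.coe_castSucc]; omega) h)

lemma red_cross0 (hb : ∀ s t : Fin (n+1), s ≤ t → b s → b t)
    (τ : Fin n) (hτ1 : ¬ b τ.castSucc) (hτ2 : b τ.succ) (hτv : τ.val = 0) :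
    (∀ t : Fin n, (b t.succ ↔ b t.castSucc ∨ c t)) ↔ c τ := by
  constructor
  · intro h
    rcases (h τ).mp hτ2 with h' | h'
    · exact absurd h' hτ1
    · exact h'
  · intro hcτ t
    by_cases ht : t.val = 0
    · have heq : t = τ := Fin.ext (by omega)
      subst heq
      exact iff_of_true hτ2 (Or.inr hcτ)
    · have h1 : b t.castSucc := hb τ.succ t.castSucc
        (by simp only [Fin.le_def, Fin.val_succ, Fin.coe_castSucc]; omega) hτ2
      have h2 : b t.succ := hb t.castSucc t.succ
        (by simp only [Fin.le_def, Fin.val_succ, Fin.coe_castSucc]; omega) h1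
      exact iff_of_true h2 (Or.inl h1)

lemma red_cross (hb : ∀ s t : Fin (n+1), s ≤ t → b s → b t)
    (hc : ∀ s t : Fin n, s ≤ t → c s → c t)
    (τ τ' : Fin n) (hτ1 : ¬ b τ.castSucc) (hτ2 : b τ.succ) (hττ' : τ'.val + 1 = τ.val) :
    (∀ t : Fin n, (b t.succ ↔ b t.castSucc ∨ c t)) ↔ (c τ ∧ ¬ c τ') := by
  constructor
  · intro h
    have hcτ : c τ := by
      rcases (h τ).mp hτ2 with h' | h'
      · exact absurd h' hτ1
      · exact h'
    refine ⟨hcτ, fun hcontra => ?_⟩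
    have hbs : b τ'.succ := (h τ').mpr (Or.inr hcontra)
    exact hτ1 (hb τ'.succ τ.castSucc
      (by simp only [Fin.le_def, Fin.val_succ, Fin.coe_castSucc]; omega) hbs)
  · rintro ⟨hcτ, hncτ'⟩ t
    rcases Nat.lt_trichotomy t.val τ.val with ht | ht | ht
    · have hnb1 : ¬ b t.succ := fun hh =>
        hτ1 (hb t.succ τ.castSucc
          (by simp only [Fin.le_def, Fin.val_succ, Fin.coe_castSucc]; omega) hh)
      have hnb2 : ¬ b t.castSucc := fun hh =>
        hτ1 (hb t.castSucc τ.castSucc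
          (by simp only [Fin.le_def, Fin.val_succ, Fin.coe_castSucc]; omega) hh)
      have hnc : ¬ c t := fun hh => hncτ'
        (hc t τ' (by simp only [Fin.le_def]; omega) hh)
      refine iff_of_false hnb1 ?_
      rintro (h | h)
      · exact hnb2 h
      · exact hnc h
    · have heq : t = τ := Fin.ext ht
      subst heq
      exact iff_of_true hτ2 (Or.inr hcτ)
    · have h1 : b t.castSucc := hb τ.succ t.castSucc
        (by simp only [Fin.le_def, Fin.val_succ, Fin.coe_castSucc]; omega) hτ2
      have h2 : b t.succ := hb t.castSucc t.succ
        (by simp only [Fin.le_def, Fin.val_succ, Fin.coe_castSucc]; omega) h1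
      exact iff_of_true h2 (Or.inl h1)

end Red

/-! ### The per-agent equality -/

open Classical in
lemma per_agent {n m : ℕ} (w : Fin m → Fin n → Fin n → ℝ)
    (hw0 : ∀ k i j, 0 ≤ w k i j) (hw1 : ∀ k i, ∑ j : Fin n, w k i j = 1)
    (P : Protocol) (a : Fin n) (T : Fin (n+1) → Finset (Fin n))
    (hT : ∀ s t : Fin (n+1), s ≤ t → T s ⊆ T t) :
    (uMeas m {r | ∀ t : Fin n, (a ∈ T t.succ ↔ a ∈ T t.castSucc ∨
        pCondR P (fun k => ∑ j ∈ T t.castSucc, w k a j) r)}).toReal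
      = ∑ f : Fin m → Fin n, (if (∀ t : Fin n, (a ∈ T t.succ ↔ a ∈ T t.castSucc ∨
          pCondE P (T t.castSucc) f)) then ∏ k, w k a (f k) else 0) := by
  have hW1 : ∀ k, ∑ j, w k a j = 1 := fun k => hw1 k a
  have hp0 : ∀ (B : Finset (Fin n)) (k : Fin m), 0 ≤ ∑ j ∈ B, w k a j :=
    fun B k => Finset.sum_nonneg fun j _ => hw0 k a j
  have hpm : ∀ (B B' : Finset (Fin n)), B ⊆ B' →
      ∀ k : Fin m, ∑ j ∈ B, w k a j ≤ ∑ j ∈ B', w k a j :=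
    fun B B' h k => Finset.sum_le_sum_of_subset_of_nonneg h fun j _ _ => hw0 k a j
  have hp1 : ∀ (B : Finset (Fin n)) (k : Fin m), ∑ j ∈ B, w k a j ≤ 1 := fun B k => by
    rw [← hW1 k]; exact hpm B Finset.univ (Finset.subset_univ B) k
  have hb : ∀ s t : Fin (n+1), s ≤ t → a ∈ T s → a ∈ T t := fun s t h hm => hT s t h hm
  have hcastle : ∀ s t : Fin n, s ≤ t → T s.castSucc ⊆ T t.castSucc := fun s t h =>
    hT s.castSucc t.castSucc (Fin.castSucc_le_castSucc_iff.mpr h)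
  by_cases h0 : a ∈ T 0
  · -- case: a seeded
    have hL : {r : Fin m → ℝ | ∀ t : Fin n, (a ∈ T t.succ ↔ a ∈ T t.castSucc ∨
        pCondR P (fun k => ∑ j ∈ T t.castSucc, w k a j) r)} = Set.univ :=
      Set.eq_univ_of_forall fun r => red_mem0 hb h0
    rw [hL, measure_univ, ENNReal.toReal_one,
      Finset.sum_congr rfl fun f _ => if_pos (red_mem0 hb h0)]
    exact (sigma_total (fun k j => w k a j) hW1).symm
  · by_cases hl : a ∈ T (Fin.last n)
    · -- case: a activates at some time
      have hne : (Finset.univ.filter fun t : Fin (n+1) => a ∈ T t).Nonempty :=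
        ⟨Fin.last n, by simp [hl]⟩
      set τ₀ := Finset.min' _ hne with hτ₀def
      have hτ₀mem : a ∈ T τ₀ := by
        have h := Finset.min'_mem _ hne
        simp only [Finset.mem_filter] at h
        exact h.2
      have hτ₀min : ∀ t : Fin (n+1), a ∈ T t → τ₀ ≤ t := fun t ht =>
        Finset.min'_le _ t (by simp [ht])
      have hτ₀pos : τ₀.val ≠ 0 := by
        intro h
        exact h0 (by rwa [show τ₀ = 0 from Fin.ext h] at hτ₀mem)
      have hτ₀lt : τ₀.val < n + 1 := τ₀.isLt
      set τ : Fin n := ⟨τ₀.val - 1, by omega⟩ with hτdef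
      have hτsucc : τ.succ = τ₀ := Fin.ext (by simp only [Fin.val_succ, hτdef]; omega)
      have hτ2 : a ∈ T τ.succ := hτsucc ▸ hτ₀mem
      have hτ1 : a ∉ T τ.castSucc := fun hmem => by
        have h := hτ₀min _ hmem
        rw [Fin.le_def] at h
        simp only [Fin.coe_castSucc, hτdef] at h
        omega
      by_cases hτv : τ.val = 0
      · -- activates at the first step
        have hLset : {r : Fin m → ℝ | ∀ t : Fin n, (a ∈ T t.succ ↔ a ∈ T t.castSucc ∨
            pCondR P (fun k => ∑ j ∈ T t.castSucc, w k a j) r)}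
              = {r | pCondR P (fun k => ∑ j ∈ T τ.castSucc, w k a j) r} := by
          ext r
          exact red_cross0 hb τ hτ1 hτ2 hτv
        rw [hLset, uMeas_pCondR_toReal P _ (hp0 _) (hp1 _),
          Finset.sum_congr rfl fun f _ =>
            if_congr (red_cross0 hb τ hτ1 hτ2 hτv) rfl rfl,
          sigma_sum P _ (fun k j => w k a j) hW1]
      · -- activates later
        set τ' : Fin n := ⟨τ.val - 1, by omega⟩ with hτ'def
        have hττ' : τ'.val + 1 = τ.val := by
          have e1 : τ'.val = τ.val - 1 := rfl
          omega
        have hcR : ∀ r : Fin m → ℝ, ∀ s t : Fin n, s ≤ t →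
            pCondR P (fun k => ∑ j ∈ T s.castSucc, w k a j) r →
            pCondR P (fun k => ∑ j ∈ T t.castSucc, w k a j) r :=
          fun r s t h => pCondR_mono P fun k => hpm _ _ (hcastle s t h) k
        have hcE : ∀ f : Fin m → Fin n, ∀ s t : Fin n, s ≤ t →
            pCondE P (T s.castSucc) f → pCondE P (T t.castSucc) f :=
          fun f s t h => pCondE_mono P (hcastle s t h)
        have hLset : {r : Fin m → ℝ | ∀ t : Fin n, (a ∈ T t.succ ↔ a ∈ T t.castSucc ∨
            pCondR P (fun k => ∑ j ∈ T t.castSucc, w k a j) r)}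
              = {r | pCondR P (fun k => ∑ j ∈ T τ.castSucc, w k a j) r}
                \ {r | pCondR P (fun k => ∑ j ∈ T τ'.castSucc, w k a j) r} := by
          ext r
          exact red_cross hb (hcR r) τ τ' hτ1 hτ2 hττ'
        have hsub : {r : Fin m → ℝ | pCondR P (fun k => ∑ j ∈ T τ'.castSucc, w k a j) r}
            ⊆ {r | pCondR P (fun k => ∑ j ∈ T τ.castSucc, w k a j) r} :=
          fun r hr => pCondR_mono P
            (fun k => hpm _ _ (hcastle τ' τ (by rw [Fin.le_def]; omega)) k) hr
        rw [hLset, measure_diff hsub (measurableSet_pCondR P _).nullMeasurableSet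
          (measure_ne_top _ _),
          ENNReal.toReal_sub_of_le (measure_mono hsub) (measure_ne_top _ _),
          uMeas_pCondR_toReal P _ (hp0 _) (hp1 _), uMeas_pCondR_toReal P _ (hp0 _) (hp1 _)]
        have hsplit : ∀ f : Fin m → Fin n,
            (if (∀ t : Fin n, (a ∈ T t.succ ↔ a ∈ T t.castSucc ∨
                pCondE P (T t.castSucc) f)) then ∏ k, w k a (f k) else 0)
              = (if pCondE P (T τ.castSucc) f then ∏ k, w k a (f k) else 0)
                - (if pCondE P (T τ'.castSucc) f then ∏ k, w k a (f k) else 0) := by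
          intro f
          rw [if_congr (red_cross hb (hcE f) τ τ' hτ1 hτ2 hττ') rfl rfl]
          by_cases h1 : pCondE P (T τ'.castSucc) f
          · have h2 : pCondE P (T τ.castSucc) f :=
              hcE f τ' τ (by rw [Fin.le_def]; omega) h1
            simp [h1, h2]
          · by_cases h2 : pCondE P (T τ.castSucc) f <;> simp [h1, h2]
        rw [Finset.sum_congr rfl fun f _ => hsplit f, Finset.sum_sub_distrib,
          sigma_sum P _ (fun k j => w k a j) hW1, sigma_sum P _ (fun k j => w k a j) hW1]
    · -- case: a never activates
      have hn : 0 < n := a.pos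
      have hLset : {r : Fin m → ℝ | ∀ t : Fin n, (a ∈ T t.succ ↔ a ∈ T t.castSucc ∨
          pCondR P (fun k => ∑ j ∈ T t.castSucc, w k a j) r)}
            = {r | pCondR P (fun k => ∑ j ∈ T (⟨n-1, by omega⟩ : Fin n).castSucc, w k a j) r}ᶜ := by
        ext r
        exact red_never hb
          (fun s t h => pCondR_mono P fun k => hpm _ _ (hcastle s t h) k) hl hn
      rw [hLset, prob_compl_eq_one_sub (measurableSet_pCondR P _),
        ENNReal.toReal_sub_of_le prob_le_one ENNReal.one_ne_top, ENNReal.toReal_one,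
        uMeas_pCondR_toReal P _ (hp0 _) (hp1 _)]
      have hsplit : ∀ f : Fin m → Fin n,
          (if (∀ t : Fin n, (a ∈ T t.succ ↔ a ∈ T t.castSucc ∨
              pCondE P (T t.castSucc) f)) then ∏ k, w k a (f k) else 0)
            = ∏ k, w k a (f k)
              - (if pCondE P (T (⟨n-1, by omega⟩ : Fin n).castSucc) f
                  then ∏ k, w k a (f k) else 0) := by
        intro f
        rw [if_congr (red_never hb (fun s t h => pCondE_mono P (hcastle s t h)) hl hn)
          rfl rfl]
        by_cases h1 : pCondE P (T (⟨n-1, by omega⟩ : Fin n).castSucc) f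
        · rw [if_neg (not_not_intro h1), if_pos h1]
          ring
        · rw [if_pos h1, if_neg h1]
          ring
      rw [Finset.sum_congr rfl fun f _ => hsplit f, Finset.sum_sub_distrib,
        sigma_total (fun k j => w k a j) hW1,
        sigma_sum P _ (fun k j => w k a j) hW1]

/-! ### Step membership and fibers -/

lemma mem_ltmStep {n m : ℕ} (w : Fin m → Fin n → Fin n → ℝ) (u : Fin n → Protocol)
    (μ : Fin n → Fin m → ℝ) (A : Finset (Fin n)) (a : Fin n) :
    a ∈ ltmStep w u μ A ↔ a ∈ A ∨ pCondR (u a) (fun k => ∑ j ∈ A, w k a j) (μ a) := by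
  cases hu : u a <;>
    simp [ltmStep, pCondR, hu]

lemma mem_lemStep {n m : ℕ} (S₀ : Finset (Fin n)) (u : Fin n → Protocol)
    (σ : Fin n → Fin m → Fin n) (A : Finset (Fin n)) (a : Fin n) :
    a ∈ lemStep S₀ u σ A ↔ a ∈ S₀ ∨ a ∈ A ∨ pCondE (u a) A (σ a) := by
  cases hu : u a <;>
    simp [lemStep, pCondE, hu, or_assoc]

open Classical in
lemma measurableSet_rowSet {n m : ℕ} (P : Protocol) (b1 b2 : Fin n → Prop)
    (c : Fin n → Fin m → ℝ) :
    MeasurableSet {r : Fin m → ℝ | ∀ t : Fin n, (b1 t ↔ b2 t ∨ pCondR P (c t) r)} := by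
  have h : {r : Fin m → ℝ | ∀ t, (b1 t ↔ b2 t ∨ pCondR P (c t) r)}
      = ⋂ t, {r | b1 t ↔ b2 t ∨ pCondR P (c t) r} := by
    ext r; simp
  rw [h]
  refine MeasurableSet.iInter fun t => ?_
  by_cases h1 : b1 t <;> by_cases h2 : b2 t
  · simp [h1, h2]
  · have he : {r : Fin m → ℝ | b1 t ↔ b2 t ∨ pCondR P (c t) r} = {r | pCondR P (c t) r} := by
      ext r; simp [h1, h2]
    rw [he]; exact measurableSet_pCondR P _
  · have he : {r : Fin m → ℝ | b1 t ↔ b2 t ∨ pCondR P (c t) r} = ∅ := by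
      ext r; simp [h1, h2]
    rw [he]; exact MeasurableSet.empty
  · have he : {r : Fin m → ℝ | b1 t ↔ b2 t ∨ pCondR P (c t) r} = {r | pCondR P (c t) r}ᶜ := by
      ext r; simp [h1, h2]
    rw [he]; exact (measurableSet_pCondR P _).compl

lemma fiber_eq {n m : ℕ} (w : Fin m → Fin n → Fin n → ℝ) (u : Fin n → Protocol)
    (S₀ : Finset (Fin n)) (T : Fin (n+1) → Finset (Fin n)) (hT0 : T 0 = S₀) :
    {μ : Fin n → Fin m → ℝ | ∀ t : Fin (n+1), (ltmStep w u μ)^[t.val] S₀ = T t}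
      = Set.univ.pi (fun a => {r : Fin m → ℝ | ∀ t : Fin n,
          (a ∈ T t.succ ↔ a ∈ T t.castSucc ∨
            pCondR (u a) (fun k => ∑ j ∈ T t.castSucc, w k a j) r)}) := by
  ext μ
  rw [Set.mem_setOf_eq, iter_eq_iff, Set.mem_univ_pi]
  simp only [hT0, true_and]
  constructor
  · intro h a
    intro t
    have h2 := Finset.ext_iff.mp (h t) a
    rw [mem_ltmStep] at h2
    exact h2.symm
  · intro h t
    ext a
    rw [mem_ltmStep]
    exact (h a t).symm

lemma fiber_empty {n m : ℕ} (w : Fin m → Fin n → Fin n → ℝ) (u : Fin n → Protocol)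
    (S₀ : Finset (Fin n)) (T : Fin (n+1) → Finset (Fin n)) (hT0 : T 0 ≠ S₀) :
    {μ : Fin n → Fin m → ℝ | ∀ t : Fin (n+1), (ltmStep w u μ)^[t.val] S₀ = T t} = ∅ := by
  ext μ
  simp only [Set.mem_setOf_eq, Set.mem_empty_iff_false, iff_false]
  intro h
  exact hT0 (((iter_eq_iff _ _ _ T).mp h).1)

/-! ### The per-trajectory equality -/

open Classical in
lemma key_T {n m : ℕ} (w : Fin m → Fin n → Fin n → ℝ)
    (hw0 : ∀ k i j, 0 ≤ w k i j) (hw1 : ∀ k i, ∑ j : Fin n, w k i j = 1)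
    (u : Fin n → Protocol) (S₀ : Finset (Fin n)) (T : Fin (n+1) → Finset (Fin n)) :
    (thMeasure n m {μ | ∀ t : Fin (n+1), (ltmStep w u μ)^[t.val] S₀ = T t}).toReal
      = ∑ σ : Fin n → Fin m → Fin n,
          (if (∀ t : Fin (n+1), (lemStep S₀ u σ)^[t.val] S₀ = T t)
            then ∏ a : Fin n, ∏ k : Fin m, w k a (σ a k) else 0) := by
  by_cases hT0 : T 0 = S₀
  · by_cases hmono : ∀ t : Fin n, T t.castSucc ⊆ T t.succ
    · -- good trajectory: chain
      have hT : ∀ s t : Fin (n+1), s ≤ t → T s ⊆ T t := by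
        have key : ∀ (v : ℕ) (hv : v < n + 1) (s : Fin (n+1)), s.val ≤ v → T s ⊆ T ⟨v, hv⟩ := by
          intro v
          induction v with
          | zero =>
            intro hv s hs
            have he : s = ⟨0, hv⟩ := Fin.ext (by show s.val = 0; omega)
            rw [he]
          | succ v ih =>
            intro hv s hs
            by_cases hsv : s.val = v + 1
            · have he : s = ⟨v+1, hv⟩ := Fin.ext hsv
              rw [he]
            · have h1 : T s ⊆ T ⟨v, by omega⟩ := ih (by omega) s (by omega)
              refine h1.trans ?_
              have h2 := hmono ⟨v, by omega⟩
              have e1 : ((⟨v, by omega⟩ : Fin n)).castSucc = (⟨v, by omega⟩ : Fin (n+1)) := rfl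
              have e2 : ((⟨v, by omega⟩ : Fin n)).succ = (⟨v+1, hv⟩ : Fin (n+1)) := rfl
              rwa [e1, e2] at h2
        intro s t hst
        have h3 := key t.val t.isLt s (Fin.le_def.mp hst)
        simpa using h3
      rw [fiber_eq w u S₀ T hT0,
        show thMeasure n m = Measure.pi (fun _ : Fin n => uMeas m) from rfl,
        Measure.pi_pi, ENNReal.toReal_prod]
      have hcond : ∀ σ : Fin n → Fin m → Fin n,
          (∀ t : Fin (n+1), (lemStep S₀ u σ)^[t.val] S₀ = T t)
            ↔ (∀ a : Fin n, ∀ t : Fin n, (a ∈ T t.succ ↔ a ∈ T t.castSucc ∨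
                pCondE (u a) (T t.castSucc) (σ a))) := by
        intro σ
        rw [iter_eq_iff]
        have hS : ∀ (a : Fin n) (t : Fin n), a ∈ S₀ → a ∈ T t.castSucc := fun a t ha =>
          hT 0 t.castSucc (Fin.zero_le _) (by rwa [hT0])
        constructor
        · rintro ⟨-, hs⟩ a t
          have h2 := Finset.ext_iff.mp (hs t) a
          rw [mem_lemStep] at h2
          rw [← h2]
          constructor
          · rintro (h | h | h)
            · exact Or.inl (hS a t h)
            · exact Or.inl h
            · exact Or.inr h
          · rintro (h | h)
            · exact Or.inr (Or.inl h)
            · exact Or.inr (Or.inr h)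
        · intro h
          refine ⟨hT0, fun t => ?_⟩
          ext a
          rw [mem_lemStep, h a t]
          constructor
          · rintro (h' | h' | h')
            · exact Or.inl (hS a t h')
            · exact Or.inl h'
            · exact Or.inr h'
          · rintro (h' | h')
            · exact Or.inr (Or.inl h')
            · exact Or.inr (Or.inr h')
      rw [Finset.sum_congr rfl fun σ _ => if_congr (hcond σ) rfl rfl]
      have hfac : ∀ σ : Fin n → Fin m → Fin n,
          (if (∀ a : Fin n, ∀ t : Fin n, (a ∈ T t.succ ↔ a ∈ T t.castSucc ∨
              pCondE (u a) (T t.castSucc) (σ a))) then ∏ a : Fin n, ∏ k : Fin m, w k a (σ a k) else 0)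
            = ∏ a : Fin n, (if (∀ t : Fin n, (a ∈ T t.succ ↔ a ∈ T t.castSucc ∨
                pCondE (u a) (T t.castSucc) (σ a))) then ∏ k : Fin m, w k a (σ a k) else 0) := by
        intro σ
        by_cases h : ∀ a : Fin n, ∀ t : Fin n, (a ∈ T t.succ ↔ a ∈ T t.castSucc ∨
            pCondE (u a) (T t.castSucc) (σ a))
        · rw [if_pos h]
          exact Finset.prod_congr rfl fun a _ => (if_pos (h a)).symm
        · rw [if_neg h]
          obtain ⟨a, ha⟩ := not_forall.mp h
          symm
          apply Finset.prod_eq_zero (Finset.mem_univ a)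
          rw [if_neg ha]
      rw [Finset.sum_congr rfl fun σ _ => hfac σ]
      rw [show (∑ σ : Fin n → Fin m → Fin n, ∏ a : Fin n,
          (if (∀ t : Fin n, (a ∈ T t.succ ↔ a ∈ T t.castSucc ∨
            pCondE (u a) (T t.castSucc) (σ a))) then ∏ k : Fin m, w k a (σ a k) else 0))
          = ∏ a : Fin n, ∑ f : Fin m → Fin n,
            (if (∀ t : Fin n, (a ∈ T t.succ ↔ a ∈ T t.castSucc ∨
              pCondE (u a) (T t.castSucc) f)) then ∏ k : Fin m, w k a (f k) else 0) from by
        rw [Finset.prod_univ_sum, Fintype.piFinset_univ]]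
      exact Finset.prod_congr rfl fun a _ => per_agent w hw0 hw1 (u a) a T hT
    · -- not a chain: both sides vanish
      push_neg at hmono
      obtain ⟨t0, ht0⟩ := hmono
      obtain ⟨a0, ha1, ha2⟩ := Finset.not_subset.mp ht0
      have hL : {μ : Fin n → Fin m → ℝ | ∀ t : Fin (n+1), (ltmStep w u μ)^[t.val] S₀ = T t} = ∅ := by
        ext μ
        simp only [Set.mem_setOf_eq, Set.mem_empty_iff_false, iff_false]
        intro h
        have h2 := ((iter_eq_iff _ _ _ T).mp h).2 t0
        apply ha2
        rw [← h2]
        exact Finset.subset_union_left ha1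
      rw [hL, measure_empty, ENNReal.toReal_zero]
      symm
      refine Finset.sum_eq_zero fun σ _ => ?_
      rw [if_neg]
      intro h
      have h2 := ((iter_eq_iff _ _ _ T).mp h).2 t0
      apply ha2
      rw [← h2]
      exact Finset.mem_union_left _ (Finset.mem_union_right _ ha1)
  · -- T 0 ≠ S₀: both sides vanish
    rw [fiber_empty w u S₀ T hT0, measure_empty, ENNReal.toReal_zero]
    symm
    refine Finset.sum_eq_zero fun σ _ => ?_
    rw [if_neg]
    intro h
    exact hT0 (((iter_eq_iff _ _ _ T).mp h).1)

end LL

/-- equivalence of the multiplex LTM and the multiplex LEM: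
the probability (over uniformly distributed thresholds) that agent `i` is active
at steady state equals the probability (over live-edge selections drawn from the
product PMF given by the weights) that `i` is `U`-reachable from `S₀`. -/
theorem ltm_lem_equivalence {n m : ℕ} (w : Fin m → Fin n → Fin n → ℝ)
    (hw0 : ∀ k i j, 0 ≤ w k i j) (hw1 : ∀ k i, ∑ j : Fin n, w k i j = 1)
    (u : Fin n → Protocol) (S₀ : Finset (Fin n)) (i : Fin n) :
    pLTM w u S₀ i = rProb w S₀ u i := by
  classical
  have hset : {μ : Fin n → Fin m → ℝ | i ∈ ltmSS w u S₀ μ}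
      = ⋃ T ∈ Finset.univ.filter (fun T : Fin (n+1) → Finset (Fin n) => i ∈ T (Fin.last n)),
          {μ | ∀ t : Fin (n+1), (ltmStep w u μ)^[t.val] S₀ = T t} := by
    ext μ
    simp only [Set.mem_setOf_eq, Set.mem_iUnion, Finset.mem_filter, Finset.mem_univ,
      true_and, exists_prop]
    constructor
    · intro h
      refine ⟨fun t => (ltmStep w u μ)^[t.val] S₀, ?_, fun t => rfl⟩
      show i ∈ (ltmStep w u μ)^[(Fin.last n).val] S₀
      rw [Fin.val_last]
      exact h
    · rintro ⟨T, hi, h⟩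
      have h2 := h (Fin.last n)
      rw [Fin.val_last] at h2
      show i ∈ (ltmStep w u μ)^[n] S₀
      rw [h2]
      exact hi
  have hdisj : (↑(Finset.univ.filter fun T : Fin (n+1) → Finset (Fin n) => i ∈ T (Fin.last n)) :
      Set ((Fin (n+1) → Finset (Fin n)))).PairwiseDisjoint
      (fun T => {μ : Fin n → Fin m → ℝ | ∀ t : Fin (n+1), (ltmStep w u μ)^[t.val] S₀ = T t}) := by
    intro T _ T' _ hne
    refine Set.disjoint_left.mpr fun μ h1 h2 => hne (funext fun t => ?_)
    exact (h1 t).symm.trans (h2 t)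
  have hmeasfib : ∀ T : Fin (n+1) → Finset (Fin n),
      MeasurableSet {μ : Fin n → Fin m → ℝ | ∀ t : Fin (n+1), (ltmStep w u μ)^[t.val] S₀ = T t} := by
    intro T
    by_cases hT0 : T 0 = S₀
    · rw [LL.fiber_eq w u S₀ T hT0]
      exact MeasurableSet.univ_pi fun a => LL.measurableSet_rowSet (u a) _ _ _
    · rw [LL.fiber_empty w u S₀ T hT0]
      exact MeasurableSet.empty
  unfold pLTM rProb
  rw [hset, measure_biUnion_finset hdisj (fun T _ => hmeasfib T),
    ENNReal.toReal_sum (fun T _ => measure_ne_top _ _), Finset.sum_filter]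
  have hsig : ∀ σ : Fin n → Fin m → Fin n,
      (if UReachable S₀ u σ i then ∏ a : Fin n, ∏ k : Fin m, w k a (σ a k) else 0)
        = ∑ T : Fin (n+1) → Finset (Fin n),
            (if (∀ t : Fin (n+1), (lemStep S₀ u σ)^[t.val] S₀ = T t)
              then (if i ∈ T (Fin.last n) then ∏ a : Fin n, ∏ k : Fin m, w k a (σ a k) else 0)
              else 0) := by
    intro σ
    have huniq : ∀ T : Fin (n+1) → Finset (Fin n),
        (∀ t : Fin (n+1), (lemStep S₀ u σ)^[t.val] S₀ = T t) ↔
          ((fun t : Fin (n+1) => (lemStep S₀ u σ)^[t.val] S₀) = T) := fun T =>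
      funext_iff.symm
    rw [Finset.sum_congr rfl fun T _ => if_congr (huniq T) rfl rfl,
      Finset.sum_ite_eq Finset.univ (fun t : Fin (n+1) => (lemStep S₀ u σ)^[t.val] S₀)]
    simp only [Finset.mem_univ, if_true]
    refine if_congr ?_ rfl rfl
    rw [Fin.val_last]
    exact Iff.rfl
  rw [Finset.sum_congr rfl fun σ _ => hsig σ, Finset.sum_comm]
  refine Finset.sum_congr rfl fun T _ => ?_
  by_cases hi : i ∈ T (Fin.last n)
  · rw [if_pos hi, LL.key_T w hw0 hw1 u S₀ T]
    exact Finset.sum_congr rfl fun σ _ => by rw [if_pos hi]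
  · rw [if_neg hi]
    symm
    refine Finset.sum_eq_zero fun σ _ => ?_
    rw [if_neg hi]
    simp
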